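/- Let ι be a finite index type and T ≥ 1 an integer. Let K be a convex subset of ℝ^ι. For t = 1,…,T let c_t ∈ ℝ^ι be loss vectors; for t = 1,…,T+1 let m_t ∈ ℝ^ι be prediction vectors, let ψ_t : ℝ^ι → ℝ be differentiable functions, and let p_t ∈ K be a minimizer over K of the map p ↦ ⟨p, Σ_{τ=1}^{t−1} c_τ + m_t⟩ + ψ_t(p). Then for every u ∈ K: Σ_{t=1}^{T} ⟨p_t − u, c_t⟩ ≤ ψ_1(u) − ψ_1(p_1) + Σ_{t=1}^{T} (ψ_{t+1}(u) − ψ_t(u) + ψ_t(p_{t+1}) − ψ_{t+1}(p_{t+1})) + Σ_{t=1}^{T} (⟨p_t − p_{t+1}, c_t − m_t⟩ − D_{ψ_t}(p_{t+1}, p_t)) + ⟨u − p_{T+1}, m_{T+1}⟩. -/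

import Mathlib

open Finset

private lemma tele (T : ℕ) (f : ℕ → ℝ) :
    ∑ t ∈ Finset.Icc 1 T, (f t - f (t+1)) = f 1 - f (T+1) := by
  induction T with
  | zero => simp
  | succ n ih =>
    rw [Finset.sum_Icc_succ_top (by omega : 1 ≤ n + 1), ih]
    ring

private lemma tele' (T : ℕ) (f : ℕ → ℝ) :
    ∑ t ∈ Finset.Icc 1 T, (f (t+1) - f t) = f (T+1) - f 1 := by
  have h := tele T f
  have h2 : ∑ t ∈ Finset.Icc 1 T, (f (t+1) - f t)
      = -∑ t ∈ Finset.Icc 1 T, (f t - f (t+1)) := by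
    rw [← Finset.sum_neg_distrib]
    exact Finset.sum_congr rfl fun t _ => by ring
  rw [h2, h]; ring

private lemma dirderiv {ι : Type*} [Fintype ι] (K : Set (ι → ℝ)) (hK : Convex ℝ K)
    (v : ι → ℝ) (ψ : (ι → ℝ) → ℝ) (hψ : Differentiable ℝ ψ)
    (x y : ι → ℝ) (hx : x ∈ K) (hy : y ∈ K)
    (hmin : ∀ q ∈ K, (∑ i, x i * v i) + ψ x ≤ (∑ i, q i * v i) + ψ q) :
    0 ≤ (∑ i, (y i - x i) * v i) + fderiv ℝ ψ x (y - x) := by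
  set d : ι → ℝ := y - x with hd
  set lin : (ι → ℝ) →L[ℝ] ℝ := ∑ i, v i • ContinuousLinearMap.proj i with hlin
  have hlinapp : ∀ q : ι → ℝ, lin q = ∑ i, q i * v i := by
    intro q
    simp [hlin, ContinuousLinearMap.sum_apply, mul_comm]
  set f : (ι → ℝ) → ℝ := fun q => (∑ i, q i * v i) + ψ q with hf
  have hdf : HasFDerivAt f (lin + fderiv ℝ ψ x) x := by
    have h1 : HasFDerivAt (fun q : ι → ℝ => ∑ i, q i * v i) lin x := by
      have := lin.hasFDerivAt (x := x)
      refine this.congr_of_eventuallyEq ?_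
      filter_upwards with q using (hlinapp q).symm
    exact h1.add (hψ x).hasFDerivAt
  have hcurve : ∀ s : ℝ, HasDerivAt (fun s : ℝ => x + s • d) d s := by
    intro s
    simpa using ((hasDerivAt_id s).smul_const d).const_add x
  set φ : ℝ → ℝ := fun s => f (x + s • d) with hφ
  have hφd : HasDerivAt φ ((lin + fderiv ℝ ψ x) d) 0 := by
    have hdf' : HasFDerivAt f (lin + fderiv ℝ ψ x) ((fun s : ℝ => x + s • d) 0) := by
      simpa using hdf
    exact hdf'.comp_hasDerivAt 0 (hcurve 0)
  have hmem : ∀ s ∈ Set.Icc (0:ℝ) 1, x + s • d ∈ K := by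
    intro s hs
    have : x + s • d = (1 - s) • x + s • y := by
      rw [hd]; module
    rw [this]
    exact hK hx hy (by linarith [hs.2]) hs.1 (by ring)
  have hslope : ∀ᶠ s in nhdsWithin (0:ℝ) (Set.Ioi 0), 0 ≤ slope φ 0 s := by
    filter_upwards [Ioc_mem_nhdsGT (by norm_num : (0:ℝ) < 1)] with s hs
    have h1 : φ 0 ≤ φ s := by
      have := hmin (x + s • d) (hmem s ⟨le_of_lt hs.1, hs.2⟩)
      simpa [φ, f] using this
    rw [slope_def_field, sub_zero]
    exact div_nonneg (by linarith) hs.1.le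
  have htend : Filter.Tendsto (slope φ 0) (nhdsWithin (0:ℝ) (Set.Ioi 0))
      (nhds ((lin + fderiv ℝ ψ x) d)) := by
    have h := (hφd.hasDerivWithinAt (s := Set.Ioi 0))
    rw [hasDerivWithinAt_iff_tendsto_slope] at h
    simpa [Set.diff_singleton_eq_self (by simp : (0:ℝ) ∉ Set.Ioi 0)] using h
  have := ge_of_tendsto htend hslope
  calc (0:ℝ) ≤ (lin + fderiv ℝ ψ x) d := this
    _ = (∑ i, (y i - x i) * v i) + fderiv ℝ ψ x (y - x) := by
        simp [ContinuousLinearMap.add_apply, hlinapp d, hd]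
        rw [hlinapp, hlinapp, ← Finset.sum_sub_distrib]
        exact Finset.sum_congr rfl fun i _ => by ring

theorem oftrl_regret_decomposition
    {ι : Type*} [Fintype ι] (T : ℕ) (hT : 1 ≤ T)
    (K : Set (ι → ℝ)) (hK : Convex ℝ K)
    (c m : ℕ → ι → ℝ) (ψ : ℕ → (ι → ℝ) → ℝ)
    (hψ : ∀ t ∈ Finset.Icc 1 (T + 1), Differentiable ℝ (ψ t))
    (p : ℕ → ι → ℝ)
    (hpK : ∀ t ∈ Finset.Icc 1 (T + 1), p t ∈ K)
    (hmin : ∀ t ∈ Finset.Icc 1 (T + 1), ∀ q ∈ K,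
      (∑ i, p t i * ((∑ τ ∈ Finset.Icc 1 (t - 1), c τ i) + m t i)) + ψ t (p t) ≤
        (∑ i, q i * ((∑ τ ∈ Finset.Icc 1 (t - 1), c τ i) + m t i)) + ψ t q)
    (u : ι → ℝ) (hu : u ∈ K) :
    ∑ t ∈ Finset.Icc 1 T, ∑ i, (p t i - u i) * c t i ≤
      ψ 1 u - ψ 1 (p 1)
      + ∑ t ∈ Finset.Icc 1 T,
          (ψ (t + 1) u - ψ t u + ψ t (p (t + 1)) - ψ (t + 1) (p (t + 1)))
      + ∑ t ∈ Finset.Icc 1 T,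
          ((∑ i, (p t i - p (t + 1) i) * (c t i - m t i))
            - (ψ t (p (t + 1)) - ψ t (p t)
                - fderiv ℝ (ψ t) (p t) (p (t + 1) - p t)))
      + ∑ i, (u i - p (T + 1) i) * m (T + 1) i := by
  -- notation
  set S : ℕ → ℝ := fun t =>
    ∑ i, (p t i - p (t+1) i) * ((∑ τ ∈ Finset.Icc 1 (t - 1), c τ i) + m t i) with hS
  -- first-order optimality
  have key : ∀ t ∈ Finset.Icc 1 T,
      S t ≤ fderiv ℝ (ψ t) (p t) (p (t + 1) - p t) := by
    intro t ht
    simp only [Finset.mem_Icc] at ht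
    have ht1 : t ∈ Finset.Icc 1 (T + 1) := by simp [Finset.mem_Icc]; omega
    have ht2 : t + 1 ∈ Finset.Icc 1 (T + 1) := by simp [Finset.mem_Icc]; omega
    have h := dirderiv K hK (fun i => (∑ τ ∈ Finset.Icc 1 (t - 1), c τ i) + m t i)
      (ψ t) (hψ t ht1) (p t) (p (t+1)) (hpK t ht1) (hpK (t+1) ht2)
      (fun q hq => hmin t ht1 q hq)
    have hsum : (∑ i, (p (t+1) i - p t i) * ((∑ τ ∈ Finset.Icc 1 (t - 1), c τ i) + m t i))
        = -S t := by
      rw [hS, ← Finset.sum_neg_distrib]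
      exact Finset.sum_congr rfl fun i _ => by ring
    rw [hsum] at h
    linarith
  -- reduce to the S-version of the stability sum
  have hred : ∑ t ∈ Finset.Icc 1 T,
        ((∑ i, (p t i - p (t + 1) i) * (c t i - m t i))
          - (ψ t (p (t + 1)) - ψ t (p t) - S t)) ≤
      ∑ t ∈ Finset.Icc 1 T,
        ((∑ i, (p t i - p (t + 1) i) * (c t i - m t i))
          - (ψ t (p (t + 1)) - ψ t (p t)
              - fderiv ℝ (ψ t) (p t) (p (t + 1) - p t))) := by
    apply Finset.sum_le_sum
    intro t ht
    have := key t ht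
    linarith
  -- split the two big sums into telescoping pieces
  have hsplit : (∑ t ∈ Finset.Icc 1 T,
        (ψ (t + 1) u - ψ t u + ψ t (p (t + 1)) - ψ (t + 1) (p (t + 1))))
      + (∑ t ∈ Finset.Icc 1 T,
        ((∑ i, (p t i - p (t + 1) i) * (c t i - m t i))
          - (ψ t (p (t + 1)) - ψ t (p t) - S t)))
    = (∑ t ∈ Finset.Icc 1 T, (ψ (t+1) u - ψ t u))
      + (∑ t ∈ Finset.Icc 1 T, (ψ t (p t) - ψ (t+1) (p (t+1))))
      + (∑ t ∈ Finset.Icc 1 T,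
          ((∑ i, (p t i - p (t + 1) i) * (c t i - m t i)) + S t)) := by
    rw [← Finset.sum_add_distrib, ← Finset.sum_add_distrib, ← Finset.sum_add_distrib]
    exact Finset.sum_congr rfl fun t _ => by ring
  have tIa : ∑ t ∈ Finset.Icc 1 T, (ψ (t+1) u - ψ t u) = ψ (T+1) u - ψ 1 u :=
    tele' T (fun t => ψ t u)
  have tIb : ∑ t ∈ Finset.Icc 1 T, (ψ t (p t) - ψ (t+1) (p (t+1)))
      = ψ 1 (p 1) - ψ (T+1) (p (T+1)) :=
    tele T (fun t => ψ t (p t))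
  -- the linear telescoping identity
  set g : ℕ → ℝ := fun t => ∑ i, p t i * (∑ τ ∈ Finset.Icc 1 (t - 1), c τ i) with hg
  have tIc : ∑ t ∈ Finset.Icc 1 T,
        ((∑ i, (p t i - p (t + 1) i) * (c t i - m t i)) + S t)
      = (∑ t ∈ Finset.Icc 1 T, ∑ i, p t i * c t i) + (g 1 - g (T+1)) := by
    rw [← tele T g, ← Finset.sum_add_distrib]
    apply Finset.sum_congr rfl
    intro t ht
    simp only [Finset.mem_Icc] at ht
    obtain ⟨s, rfl⟩ : ∃ s, t = s + 1 := ⟨t - 1, by omega⟩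
    have e : ∀ i, (p (s+1) i - p (s+2) i) * (c (s+1) i - m (s+1) i)
        + (p (s+1) i - p (s+2) i) * ((∑ τ ∈ Finset.Icc 1 s, c τ i) + m (s+1) i)
        = p (s+1) i * c (s+1) i
          + (p (s+1) i * (∑ τ ∈ Finset.Icc 1 s, c τ i)
              - p (s+2) i * (∑ τ ∈ Finset.Icc 1 (s+1), c τ i)) := by
      intro i
      rw [Finset.sum_Icc_succ_top (by omega : 1 ≤ s + 1)]
      ring
    have hred1 : S (s+1) = ∑ i, (p (s+1) i - p (s+2) i)
        * ((∑ τ ∈ Finset.Icc 1 s, c τ i) + m (s+1) i) := by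
      simp [hS]
    have hg1 : g (s+1) = ∑ i, p (s+1) i * (∑ τ ∈ Finset.Icc 1 s, c τ i) := by simp [hg]
    have hg2 : g (s+2) = ∑ i, p (s+2) i * (∑ τ ∈ Finset.Icc 1 (s+1), c τ i) := by simp [hg]
    rw [hred1, hg1]
    show _ = _ + (_ - g (s + 1 + 1))
    rw [hg2, ← Finset.sum_add_distrib, ← Finset.sum_sub_distrib, ← Finset.sum_add_distrib]
    exact Finset.sum_congr rfl fun i _ => e i
  have hg10 : g 1 = 0 := by simp [hg]
  have hgT : g (T+1) = ∑ i, p (T+1) i * (∑ τ ∈ Finset.Icc 1 T, c τ i) := by simp [hg]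
  -- LHS decomposition
  have hLHS : ∑ t ∈ Finset.Icc 1 T, ∑ i, (p t i - u i) * c t i
      = (∑ t ∈ Finset.Icc 1 T, ∑ i, p t i * c t i)
        - ∑ i, u i * (∑ τ ∈ Finset.Icc 1 T, c τ i) := by
    have h1 : ∀ t, (∑ i, (p t i - u i) * c t i)
        = (∑ i, p t i * c t i) - ∑ i, u i * c t i := by
      intro t
      rw [← Finset.sum_sub_distrib]
      exact Finset.sum_congr rfl fun i _ => by ring
    calc ∑ t ∈ Finset.Icc 1 T, ∑ i, (p t i - u i) * c t i
        = ∑ t ∈ Finset.Icc 1 T, ((∑ i, p t i * c t i) - ∑ i, u i * c t i) :=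
          Finset.sum_congr rfl fun t _ => h1 t
      _ = (∑ t ∈ Finset.Icc 1 T, ∑ i, p t i * c t i)
          - ∑ t ∈ Finset.Icc 1 T, ∑ i, u i * c t i := Finset.sum_sub_distrib _ _
      _ = _ := by
          congr 1
          rw [Finset.sum_comm]
          exact Finset.sum_congr rfl fun i _ => by rw [Finset.mul_sum]
  -- final optimality at T+1
  have hfin := hmin (T+1) (by simp [Finset.mem_Icc]) u hu
  simp only [Nat.add_sub_cancel] at hfin
  have hexp : ∀ x : ι → ℝ,
      (∑ i, x i * ((∑ τ ∈ Finset.Icc 1 T, c τ i) + m (T+1) i))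
      = (∑ i, x i * (∑ τ ∈ Finset.Icc 1 T, c τ i)) + ∑ i, x i * m (T+1) i := by
    intro x
    rw [← Finset.sum_add_distrib]
    exact Finset.sum_congr rfl fun i _ => by ring
  rw [hexp, hexp] at hfin
  have hD : ∑ i, (u i - p (T + 1) i) * m (T + 1) i
      = (∑ i, u i * m (T+1) i) - ∑ i, p (T+1) i * m (T+1) i := by
    rw [← Finset.sum_sub_distrib]
    exact Finset.sum_congr rfl fun i _ => by ring
  -- also need u version of hgT-style atom: present in hfin as ∑ i, u i * (∑ ...)
  linarith [hred, hsplit, tIa, tIb, tIc, hg10, hgT, hLHS, hfin, hD]
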